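/- arXiv:2511.01540 — 5 statements merged into one kernel-verified Lean document; each statement's English description precedes it below -/
import Mathlib

section
/- Let d ≥ 1, λ > 0, and suppose f : ℝ^d → ℝ is given by f(x) = max_{1 ≤ i ≤ n} (⟨m_i, x⟩ + c_i) for vectors m_1, …, m_n ∈ ℝ^d and scalars c_1, …, c_n ∈ ℝ. Then for every x ∈ ℝ^d, the λc-transform of f satisfies f^{λc}(x) = max_{1 ≤ i ≤ n} (⟨m_i, x⟩ + c_i + ‖m_i‖²/(2λ)). -/
open MeasureTheory

/-- The λc-transform (quadratic cost `c(x,y) = ½‖x-y‖²`) of a convex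
piecewise-linear function `f(x) = max_i (⟨mᵢ, x⟩ + cᵢ)` on `ℝ^d` is
`max_i (⟨mᵢ, x⟩ + cᵢ + ‖mᵢ‖²/(2λ))`. -/
theorem lambda_c_transform_of_max_affine
    {d n : ℕ} (hd : 1 ≤ d) (hn : 1 ≤ n) (lam : ℝ) (hlam : 0 < lam)
    (m : Fin n → EuclideanSpace ℝ (Fin d)) (c : Fin n → ℝ)
    (f : EuclideanSpace ℝ (Fin d) → ℝ)
    (hf : ∀ x, f x = ⨆ i : Fin n, ((inner ℝ (m i) x : ℝ) + c i)) :
    ∀ x : EuclideanSpace ℝ (Fin d),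
      (⨆ y : EuclideanSpace ℝ (Fin d),
          ((f y - lam / 2 * ‖x - y‖ ^ 2 : ℝ) : EReal))
        = ((⨆ i : Fin n,
            ((inner ℝ (m i) x : ℝ) + c i + ‖m i‖ ^ 2 / (2 * lam)) : ℝ) : EReal) := by
  intro x
  haveI : Nonempty (Fin n) := ⟨⟨0, hn⟩⟩
  set g : Fin n → ℝ := fun i => (inner ℝ (m i) x : ℝ) + c i + ‖m i‖ ^ 2 / (2 * lam)
    with hg
  have hbdd : ∀ (h : Fin n → ℝ), BddAbove (Set.range h) :=
    fun h => (Set.finite_range h).bddAbove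
  apply le_antisymm
  · apply iSup_le
    intro y
    rw [EReal.coe_le_coe_iff]
    have hfy : f y ≤ (⨆ i, g i) + lam / 2 * ‖x - y‖ ^ 2 := by
      rw [hf y]
      apply ciSup_le
      intro i
      have key : (inner ℝ (m i) y : ℝ) - lam / 2 * ‖x - y‖ ^ 2
          ≤ (inner ℝ (m i) x : ℝ) + ‖m i‖ ^ 2 / (2 * lam) := by
        have h1 : (inner ℝ (m i) y : ℝ) - (inner ℝ (m i) x : ℝ)
            = inner ℝ (m i) (y - x) := by rw [inner_sub_right]
        have h2 : (inner ℝ (m i) (y - x) : ℝ) ≤ ‖m i‖ * ‖y - x‖ :=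
          real_inner_le_norm _ _
        have h3 : ‖m i‖ * ‖y - x‖ ≤ lam / 2 * ‖y - x‖ ^ 2 + ‖m i‖ ^ 2 / (2 * lam) := by
          rw [← sub_nonneg]
          have heq : lam / 2 * ‖y - x‖ ^ 2 + ‖m i‖ ^ 2 / (2 * lam) - ‖m i‖ * ‖y - x‖
              = (lam * ‖y - x‖ - ‖m i‖) ^ 2 / (2 * lam) := by
            field_simp; ring
          rw [heq]; positivity
        have h4 : ‖x - y‖ = ‖y - x‖ := norm_sub_rev _ _
        rw [h4]
        linarith [h1 ▸ h2]
      have hle : g i ≤ ⨆ j, g j := le_ciSup (hbdd g) i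
      simp only [hg] at hle ⊢
      linarith
    linarith
  · obtain ⟨i0, hi0⟩ := Finite.exists_max g
    have hsup : (⨆ i, g i) = g i0 :=
      le_antisymm (ciSup_le hi0) (le_ciSup (hbdd g) i0)
    rw [show ((⨆ i, g i : ℝ) : EReal) = ((g i0 : ℝ) : EReal) by rw [hsup]]
    set y0 : EuclideanSpace ℝ (Fin d) := x + lam⁻¹ • m i0 with hy0
    have hval : g i0 ≤ f y0 - lam / 2 * ‖x - y0‖ ^ 2 := by
      have hfy0 : (inner ℝ (m i0) y0 : ℝ) + c i0 ≤ f y0 := by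
        rw [hf y0]
        exact le_ciSup (hbdd fun j => (inner ℝ (m j) y0 : ℝ) + c j) i0
      have hinner : (inner ℝ (m i0) y0 : ℝ)
          = (inner ℝ (m i0) x : ℝ) + lam⁻¹ * ‖m i0‖ ^ 2 := by
        rw [hy0, inner_add_right, real_inner_smul_right,
          real_inner_self_eq_norm_sq]
      have hnorm : ‖x - y0‖ ^ 2 = lam⁻¹ ^ 2 * ‖m i0‖ ^ 2 := by
        have : x - y0 = (-lam⁻¹) • m i0 := by
          rw [hy0]; module
        rw [this, norm_smul]
        simp [mul_pow, abs_of_pos (inv_pos.mpr hlam)]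
      rw [hnorm]
      have hlam' : lam ≠ 0 := ne_of_gt hlam
      have : lam / 2 * (lam⁻¹ ^ 2 * ‖m i0‖ ^ 2) = ‖m i0‖ ^ 2 / (2 * lam) := by
        field_simp
      rw [this, hg]
      have : lam⁻¹ * ‖m i0‖ ^ 2 - ‖m i0‖ ^ 2 / (2 * lam) = ‖m i0‖ ^ 2 / (2 * lam) := by
        field_simp; ring
      linarith [hfy0, hinner ▸ hfy0]
    calc ((g i0 : ℝ) : EReal) ≤ ((f y0 - lam / 2 * ‖x - y0‖ ^ 2 : ℝ) : EReal) :=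
          EReal.coe_le_coe_iff.mpr hval
      _ ≤ _ := le_iSup (fun y : EuclideanSpace ℝ (Fin d) =>
          ((f y - lam / 2 * ‖x - y‖ ^ 2 : ℝ) : EReal)) y0
end

section
/- Let λ > 0, k, s ∈ ℝ and α ∈ ℝ, and let f : ℝ → ℝ be given by f(x) = max{x − k, 0} + α(x − s). Then for every x ∈ ℝ, f^{λc}(x) = max{ x − (k − (2α+1)/(2λ)), 0 } + α(x − s) + α²/(2λ). -/
/-- The λc-transform (quadratic cost) of
`f(x) = max (x - k) 0 + α (x - s)` is
`max (x - (k - (2α+1)/(2λ))) 0 + α (x - s) + α²/(2λ)`. -/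
theorem lambda_c_transform_call_plus_linear
    (lam k s α : ℝ) (hlam : 0 < lam) (f : ℝ → ℝ)
    (hf : ∀ x, f x = max (x - k) 0 + α * (x - s)) :
    ∀ x : ℝ,
      (⨆ y : ℝ, ((f y - lam / 2 * (x - y) ^ 2 : ℝ) : EReal))
        = ((max (x - (k - (2 * α + 1) / (2 * lam))) 0
            + α * (x - s) + α ^ 2 / (2 * lam) : ℝ) : EReal) := by
  intro x
  have hlam' : (lam : ℝ) ≠ 0 := hlam.ne'
  set A : ℝ := (2 * α + 1) / (2 * lam) with hAdef
  set B : ℝ := α ^ 2 / (2 * lam) with hBdef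
  have hA : 2 * lam * A = 2 * α + 1 := by rw [hAdef]; field_simp
  have hB : 2 * lam * B = α ^ 2 := by rw [hBdef]; field_simp
  set R : ℝ := max (x - (k - A)) 0 + α * (x - s) + B with hR
  have hub : ∀ y : ℝ, f y - lam / 2 * (x - y) ^ 2 ≤ R := by
    intro y
    rw [hf]
    have h1 : x - (k - A) ≤ max (x - (k - A)) 0 := le_max_left _ _
    have h2 : (0 : ℝ) ≤ max (x - (k - A)) 0 := le_max_right _ _
    rcases max_cases (y - k) 0 with ⟨he, _⟩ | ⟨he, _⟩ <;> rw [he, hR]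
    · nlinarith [sq_nonneg (lam * (y - x) - (α + 1)), hlam, mul_pos hlam hlam]
    · nlinarith [sq_nonneg (lam * (y - x) - α), hlam]
  have hlb : ∃ y : ℝ, R ≤ f y - lam / 2 * (x - y) ^ 2 := by
    rcases le_total (x - (k - A)) 0 with h | h
    · refine ⟨x + α / lam, ?_⟩
      rw [hf, hR, max_eq_right h]
      have hy : x + α / lam - k ≤ 0 := by
        have hh : α / lam = 2 * lam * A / (2 * lam) - 1 / (2 * lam) := by
          rw [hA]; field_simp; ring
        have hpos : (0:ℝ) < 1 / (2 * lam) := by positivity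
        have : 2 * lam * A / (2 * lam) = A := by field_simp
        rw [this] at hh
        linarith [hh ▸ (by linarith : x + (A - 1 / (2 * lam)) - k ≤ 0)]
      rw [max_eq_right hy]
      apply le_of_eq
      rw [hBdef]
      field_simp
      ring
    · refine ⟨x + (α + 1) / lam, ?_⟩
      rw [hf, hR, max_eq_left h]
      have hy : (0:ℝ) ≤ x + (α + 1) / lam - k := by
        have hh : (α + 1) / lam = A + 1 / (2 * lam) := by
          field_simp
          nlinarith [hA]
        have hpos : (0:ℝ) < 1 / (2 * lam) := by positivity
        rw [hh]; linarith
      rw [max_eq_left hy]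
      apply le_of_eq
      rw [hAdef, hBdef]
      field_simp
      ring
  apply le_antisymm
  · exact iSup_le fun y => EReal.coe_le_coe_iff.2 (hub y)
  · obtain ⟨y, hy⟩ := hlb
    exact le_trans (EReal.coe_le_coe_iff.2 hy)
      (le_iSup (fun y : ℝ => ((f y - lam / 2 * (x - y) ^ 2 : ℝ) : EReal)) y)
end

section
/- Let λ > 0 and K ∈ ℝ, and let f : ℝ → ℝ be the straddle payoff f(x) = max{x − K, K − x, 0}. Then for every x ∈ ℝ, f^{λc}(x) = max{ x − (K − 1/(2λ)), (K + 1/(2λ)) − x, 0 }. -/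
/-- The λc-transform (quadratic cost) of the straddle payoff
`f(x) = max {x - K, K - x, 0}` is `max {x - (K - 1/(2λ)), (K + 1/(2λ)) - x, 0}`. -/
theorem lambda_c_transform_straddle
    (lam K : ℝ) (hlam : 0 < lam) (f : ℝ → ℝ)
    (hf : ∀ x, f x = max (x - K) (max (K - x) 0)) :
    ∀ x : ℝ,
      (⨆ y : ℝ, ((f y - lam / 2 * (x - y) ^ 2 : ℝ) : EReal))
        = ((max (x - (K - 1 / (2 * lam))) (max ((K + 1 / (2 * lam)) - x) 0) : ℝ) : EReal) := by
  intro x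
  have hl2 : (0:ℝ) < 2 * lam := by linarith
  have hl : lam ≠ 0 := ne_of_gt hlam
  have hinv : 2 * lam * (1 / (2 * lam)) = 1 := mul_one_div_cancel (ne_of_gt hl2)
  have hinvpos : (0:ℝ) < 1 / (2 * lam) := by positivity
  set M : ℝ := max (x - (K - 1 / (2 * lam))) (max ((K + 1 / (2 * lam)) - x) 0) with hM
  have h1 : x - K + 1/(2*lam) ≤ M := by
    refine le_trans (le_of_eq ?_) (le_max_left _ _); ring
  have h2 : K + 1/(2*lam) - x ≤ M :=
    le_trans (le_max_left _ _) (le_max_right _ _)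
  have h3 : (0:ℝ) ≤ M :=
    le_trans (le_max_right _ _) (le_max_right _ _)
  apply le_antisymm
  · apply iSup_le
    intro y
    rw [EReal.coe_le_coe_iff, hf y, sub_le_iff_le_add]
    refine max_le ?_ (max_le ?_ ?_)
    · nlinarith [sq_nonneg (lam * (x - y) + 1), sq_nonneg (x - y)]
    · nlinarith [sq_nonneg (lam * (x - y) - 1), sq_nonneg (x - y)]
    · nlinarith [sq_nonneg (x - y)]
  · rcases le_total K x with hKx | hxK
    · refine le_trans ?_ (le_iSup _ (x + 1/lam))
      rw [EReal.coe_le_coe_iff, hf]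
      have hc : lam / 2 * (x - (x + 1/lam))^2 = 1/(2*lam) := by
        field_simp; ring
      have hfy : max (x + 1/lam - K) (max (K - (x + 1/lam)) 0) = x + 1/lam - K := by
        rw [max_eq_left]
        refine max_le ?_ ?_
        · nlinarith [one_div_pos.mpr hlam]
        · nlinarith [one_div_pos.mpr hlam]
      rw [hfy, hc]
      refine max_le ?_ (max_le ?_ ?_) <;> nlinarith [one_div_pos.mpr hlam]
    · refine le_trans ?_ (le_iSup _ (x - 1/lam))
      rw [EReal.coe_le_coe_iff, hf]
      have hc : lam / 2 * (x - (x - 1/lam))^2 = 1/(2*lam) := by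
        field_simp; ring
      have hfy : max (x - 1/lam - K) (max (K - (x - 1/lam)) 0) = K - (x - 1/lam) := by
        rw [max_eq_right, max_eq_left]
        · nlinarith [one_div_pos.mpr hlam]
        · refine le_trans ?_ (le_max_left _ _)
          nlinarith [one_div_pos.mpr hlam]
      rw [hfy, hc]
      refine max_le ?_ (max_le ?_ ?_) <;> nlinarith [one_div_pos.mpr hlam]
end

section
/- Let ν₀ be a Borel probability measure on ℝ with finite second moment, let β ∈ (0,1), θ > 0 and k ∈ ℝ. Suppose ν₀ is atomless with a strictly increasing cumulative distribution function, and let q_β ∈ ℝ be the β-quantile of ν₀, i.e. ν₀((q_β, ∞)) = 1 − β. Then inf over λ > 0 and α ∈ ℝ of the quantity α + (1/(1−β)) ( λθ + ∫ max{ x − (k + α − 1/(2λ)), 0 } dν₀(x) ) equals (q_β − k) + (1/(1−β)) ∫ max{x − q_β, 0} dν₀(x) + √(2θ/(1−β)). -/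
open MeasureTheory ENNReal

lemma call_integrable (ν₀ : Measure ℝ) [IsProbabilityMeasure ν₀]
    (hν₀2 : ∫⁻ x, ENNReal.ofReal (x ^ 2) ∂ν₀ < ⊤) (K : ℝ) :
    Integrable (fun x => max (x - K) 0) ν₀ := by
  have hsq : Integrable (fun x : ℝ => x ^ 2) ν₀ := by
    refine ⟨(measurable_id.pow_const 2).aestronglyMeasurable, ?_⟩
    simp only [HasFiniteIntegral]
    refine lt_of_eq_of_lt ?_ hν₀2
    refine lintegral_congr fun x => ?_
    exact Real.enorm_eq_ofReal (sq_nonneg x)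
  have hg : Integrable (fun x : ℝ => x ^ 2 + (1 + |K|)) ν₀ :=
    hsq.add (integrable_const _)
  refine hg.mono ?_ (Filter.Eventually.of_forall fun x => ?_)
  · exact ((continuous_id.sub continuous_const).max continuous_const).aestronglyMeasurable
  · have h1 : |x| ≤ x ^ 2 + 1 := by nlinarith [sq_abs x, sq_nonneg (|x| - 1)]
    have h2 : (0:ℝ) ≤ max (x - K) 0 := le_max_right _ _
    have h3 : max (x - K) 0 ≤ |x| + |K| := by
      rcases le_or_gt (x - K) 0 with h | h
      · rw [max_eq_right h]; positivity
      · rw [max_eq_left h.le]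
        have := neg_abs_le K; have := le_abs_self x; linarith
    rw [Real.norm_eq_abs, Real.norm_eq_abs, abs_of_nonneg h2,
      abs_of_nonneg (by positivity : (0:ℝ) ≤ x ^ 2 + (1 + |K|))]
    linarith

lemma call_key (ν₀ : Measure ℝ) [IsProbabilityMeasure ν₀]
    (hν₀2 : ∫⁻ x, ENNReal.ofReal (x ^ 2) ∂ν₀ < ⊤)
    (β qβ : ℝ) (hβ1 : β < 1)
    (hq : ν₀ (Set.Ioi qβ) = ENNReal.ofReal (1 - β)) (K : ℝ) :
    (∫ x, max (x - qβ) 0 ∂ν₀) ≤ (∫ x, max (x - K) 0 ∂ν₀) + (K - qβ) * (1 - β) := by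
  have hind : Integrable ((Set.Ioi qβ).indicator fun _ : ℝ => (K - qβ)) ν₀ :=
    (integrable_const (K - qβ)).indicator measurableSet_Ioi
  have hmono : ∀ x : ℝ,
      max (x - qβ) 0 - (Set.Ioi qβ).indicator (fun _ => (K - qβ)) x ≤ max (x - K) 0 := by
    intro x
    by_cases hx : x ∈ Set.Ioi qβ
    · rw [Set.indicator_of_mem hx]
      have hx' : qβ < x := hx
      have h1 : max (x - qβ) 0 = x - qβ := max_eq_left (by linarith)
      have h2 := le_max_left (x - K) (0:ℝ)
      linarith
    · rw [Set.indicator_of_notMem hx]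
      have hx' : x ≤ qβ := by simpa using hx
      have h1 : max (x - qβ) 0 = 0 := max_eq_right (by linarith)
      have h2 := le_max_right (x - K) (0:ℝ)
      linarith
  have hInt := integral_mono
    ((call_integrable ν₀ hν₀2 qβ).sub hind) (call_integrable ν₀ hν₀2 K) hmono
  simp only [Pi.sub_apply] at hInt
  rw [integral_sub (call_integrable ν₀ hν₀2 qβ) hind, integral_indicator_const _ measurableSet_Ioi,
    measureReal_def, hq, ENNReal.toReal_ofReal (by linarith)] at hInt
  simp only [smul_eq_mul] at hInt
  linarith

/-- First-order optimisation for the robust Expected Shortfall of a call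
option: for an atomless baseline probability measure `ν₀` with strictly increasing cdf,
finite second moment, `β ∈ (0,1)`, `θ > 0`, strike `k`, and `β`-quantile `q_β`
(`ν₀((q_β,∞)) = 1-β`), the infimum over `λ > 0` and `α ∈ ℝ` of
`α + (1/(1-β)) (λθ + ∫ (x - (k + α - 1/(2λ)))⁺ dν₀)` equals
`(q_β - k) + (1/(1-β)) ∫ (x - q_β)⁺ dν₀ + √(2θ/(1-β))`. -/
theorem robust_call_shortfall_first_order
    (ν₀ : Measure ℝ) [IsProbabilityMeasure ν₀] [NullSingletonClass ν₀]
    (hν₀2 : ∫⁻ x, ENNReal.ofReal (x ^ 2) ∂ν₀ < ⊤)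
    (hcdf : StrictMono fun x : ℝ => (ν₀ (Set.Iic x)).toReal)
    (β θ k qβ : ℝ) (hβ0 : 0 < β) (hβ1 : β < 1) (hθ : 0 < θ)
    (hq : ν₀ (Set.Ioi qβ) = ENNReal.ofReal (1 - β)) :
    sInf {r : ℝ | ∃ lam : ℝ, 0 < lam ∧ ∃ α : ℝ,
        r = α + 1 / (1 - β) *
          (lam * θ + ∫ x, max (x - (k + α - 1 / (2 * lam))) 0 ∂ν₀)}
      = (qβ - k) + 1 / (1 - β) * (∫ x, max (x - qβ) 0 ∂ν₀)
        + Real.sqrt (2 * θ / (1 - β)) := by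
  have h1β : 0 < 1 - β := by linarith
  set s : ℝ := Real.sqrt (2 * θ / (1 - β)) with hs_def
  have hs2 : s ^ 2 = 2 * θ / (1 - β) := Real.sq_sqrt (by positivity)
  have hs0 : 0 < s := Real.sqrt_pos.mpr (by positivity)
  have hθs : θ / (1 - β) = s ^ 2 / 2 := by rw [hs2]; ring
  -- key quadratic identity
  have hquad : ∀ lam : ℝ, 0 < lam →
      1 / (2 * lam) + lam * θ / (1 - β) - s = (1 - lam * s) ^ 2 / (2 * lam) := by
    intro lam hlam
    have : lam * θ / (1 - β) = lam * (θ / (1 - β)) := by ring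
    rw [this, hθs]
    field_simp
    ring
  set lam0 : ℝ := Real.sqrt ((1 - β) / (2 * θ)) with hl_def
  have hl0 : 0 < lam0 := Real.sqrt_pos.mpr (by positivity)
  have hls : lam0 * s = 1 := by
    rw [hl_def, hs_def, ← Real.sqrt_mul (by positivity)]
    rw [show (1 - β) / (2 * θ) * (2 * θ / (1 - β)) = 1 by field_simp]
    exact Real.sqrt_one
  set C : ℝ := ∫ x, max (x - qβ) 0 ∂ν₀ with hC
  set T : ℝ := (qβ - k) + 1 / (1 - β) * C + s with hT
  -- lower bound on every element
  have hlb : ∀ r ∈ {r : ℝ | ∃ lam : ℝ, 0 < lam ∧ ∃ α : ℝ,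
      r = α + 1 / (1 - β) *
        (lam * θ + ∫ x, max (x - (k + α - 1 / (2 * lam))) 0 ∂ν₀)}, T ≤ r := by
    rintro r ⟨lam, hlam, α, rfl⟩
    set K : ℝ := k + α - 1 / (2 * lam) with hK
    have hkey := call_key ν₀ hν₀2 β qβ hβ1 hq K
    have hq2 : 0 ≤ (1 - lam * s) ^ 2 / (2 * lam) := by positivity
    have hquad' := hquad lam hlam
    have hα : α = K - k + 1 / (2 * lam) := by rw [hK]; ring
    rw [hα]
    have hdiv : 1 / (1 - β) * ((K - qβ) * (1 - β)) = K - qβ := by field_simp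
    have hmul : 1 / (1 - β) * (lam * θ + ∫ x, max (x - K) 0 ∂ν₀)
        = lam * θ / (1 - β) + 1 / (1 - β) * (∫ x, max (x - K) 0 ∂ν₀) := by ring
    have hmono : 1 / (1 - β) * C ≤ 1 / (1 - β) * ((∫ x, max (x - K) 0 ∂ν₀) + (K - qβ) * (1 - β)) := by
      apply mul_le_mul_of_nonneg_left hkey (by positivity)
    rw [mul_add, hdiv] at hmono
    rw [hT, hmul]
    linarith
  -- the minimizer is in the set
  have hmem : T ∈ {r : ℝ | ∃ lam : ℝ, 0 < lam ∧ ∃ α : ℝ,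
      r = α + 1 / (1 - β) *
        (lam * θ + ∫ x, max (x - (k + α - 1 / (2 * lam))) 0 ∂ν₀)} := by
    refine ⟨lam0, hl0, qβ - k + 1 / (2 * lam0), ?_⟩
    have hKq : k + (qβ - k + 1 / (2 * lam0)) - 1 / (2 * lam0) = qβ := by ring
    rw [hKq]
    have hquad' := hquad lam0 hl0
    rw [hls] at hquad'
    simp only [sub_self, ne_eq, OfNat.ofNat_ne_zero, not_false_eq_true, zero_pow,
      zero_div] at hquad'
    have h0 : 1 / (2 * lam0) + lam0 * θ / (1 - β) = s := by linarith
    have : 1 / (1 - β) * (lam0 * θ + C) = lam0 * θ / (1 - β) + 1 / (1 - β) * C := by ring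
    rw [hT, ← hC, this]
    linarith
  exact le_antisymm (csInf_le ⟨T, hlb⟩ hmem) (le_csInf ⟨T, hmem⟩ hlb)
end

section
/- Let ν₀ be a Borel probability measure on ℝ with ∫ |x| dν₀(x) < ∞, which is atomless with a strictly increasing cumulative distribution function; let β ∈ (0,1) and let q_β be the β-quantile of ν₀, i.e. ν₀((q_β, ∞)) = 1 − β. For the call payoff f(x) = max{x − k, 0}, the (non-robust) Expected Shortfall ES_β^{ν₀}(f) = inf_{α ∈ ℝ} ( α + (1/(1−β)) ∫ max{f(x) − α, 0} dν₀(x) ) satisfies: if k ≤ q_β then ES_β^{ν₀}(f) = (q_β − k) + (1/(1−β)) ∫ max{x − q_β, 0} dν₀(x), and if k > q_β then ES_β^{ν₀}(f) = (1/(1−β)) ∫ max{x − k, 0} dν₀(x). -/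
open MeasureTheory ENNReal

/-- Non-robust Expected Shortfall of a call payoff `f(x) = (x-k)⁺` under
an atomless probability measure `ν₀` with strictly increasing cdf, `∫|x| dν₀ < ∞`,
`β ∈ (0,1)` and `β`-quantile `q_β` (`ν₀((q_β,∞)) = 1-β`):
if `k ≤ q_β` then `ES_β^{ν₀}(f) = (q_β - k) + (1/(1-β)) ∫ (x - q_β)⁺ dν₀`, and
if `k > q_β` then `ES_β^{ν₀}(f) = (1/(1-β)) ∫ (x - k)⁺ dν₀`. -/
theorem expected_shortfall_call
    (ν₀ : Measure ℝ) [IsProbabilityMeasure ν₀] [NullSingletonClass ν₀]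
    (hν₀1 : Integrable (fun x : ℝ => x) ν₀)
    (hcdf : StrictMono fun x : ℝ => (ν₀ (Set.Iic x)).toReal)
    (β k qβ : ℝ) (hβ0 : 0 < β) (hβ1 : β < 1)
    (hq : ν₀ (Set.Ioi qβ) = ENNReal.ofReal (1 - β))
    (f : ℝ → ℝ) (hf : ∀ x, f x = max (x - k) 0) :
    (k ≤ qβ →
      (⨅ α : ℝ, (α + 1 / (1 - β) * ∫ x, max (f x - α) 0 ∂ν₀))
        = (qβ - k) + 1 / (1 - β) * ∫ x, max (x - qβ) 0 ∂ν₀)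
    ∧ (qβ < k →
      (⨅ α : ℝ, (α + 1 / (1 - β) * ∫ x, max (f x - α) 0 ∂ν₀))
        = 1 / (1 - β) * ∫ x, max (x - k) 0 ∂ν₀) := by
  have hb : (0:ℝ) < 1 - β := by linarith
  set c : ℝ := 1 / (1 - β) with hcdef
  have hc0 : (0:ℝ) < c := by positivity
  have hcb : c * (1 - β) = 1 := by rw [hcdef]; field_simp
  have h1c : 1 < c := by
    rw [hcdef, lt_div_iff₀ hb]; linarith
  have hf0 : ∀ x, 0 ≤ f x := fun x => (hf x) ▸ le_max_right _ _
  -- integrability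
  have hint : ∀ t : ℝ, Integrable (fun x => max (f x - t) 0) ν₀ := by
    intro t
    have h1 : Integrable (fun x : ℝ => max (x - k) 0 - t) ν₀ :=
      ((hν₀1.sub (integrable_const k)).pos_part).sub (integrable_const t)
    have h2 := h1.pos_part
    simpa [hf] using h2
  have hfint : Integrable f ν₀ := by
    have := hint 0
    simpa [sub_zero, fun x => max_eq_left (hf0 x)] using this
  -- main inequality
  have main : ∀ (q αs : ℝ), (∀ x, αs < f x ↔ q < x) →
      ∀ α : ℝ, αs + c * (∫ x, max (f x - αs) 0 ∂ν₀)
          + (αs - α) * (c * (ν₀ (Set.Ioi q)).toReal - 1)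
        ≤ α + c * ∫ x, max (f x - α) 0 ∂ν₀ := by
    intro q αs hq' α
    have hmeas : MeasurableSet (Set.Ioi q) := measurableSet_Ioi
    have hind : Integrable ((Set.Ioi q).indicator fun _ => (1:ℝ)) ν₀ :=
      (integrable_const 1).indicator hmeas
    have hpt : ∀ x, max (f x - αs) 0
        + (αs - α) * (Set.Ioi q).indicator (fun _ => (1:ℝ)) x ≤ max (f x - α) 0 := by
      intro x
      by_cases h : αs < f x
      · have hx : (Set.Ioi q).indicator (fun _ => (1:ℝ)) x = 1 :=
          Set.indicator_of_mem ((hq' x).mp h) _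
        have h1 : max (f x - αs) 0 = f x - αs := max_eq_left (by linarith)
        rw [hx, h1]
        calc f x - αs + (αs - α) * 1 = f x - α := by ring
        _ ≤ max (f x - α) 0 := le_max_left _ _
      · have hx : (Set.Ioi q).indicator (fun _ => (1:ℝ)) x = 0 :=
          Set.indicator_of_notMem (fun hm => h ((hq' x).mpr hm)) _
        push_neg at h
        have h1 : max (f x - αs) 0 = 0 := max_eq_right (by linarith)
        simp [hx, h1, le_max_right]
    have hintle : ∫ x, (max (f x - αs) 0
          + (αs - α) * (Set.Ioi q).indicator (fun _ => (1:ℝ)) x) ∂ν₀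
        ≤ ∫ x, max (f x - α) 0 ∂ν₀ :=
      integral_mono ((hint αs).add (hind.const_mul _)) (hint α) hpt
    rw [integral_add (hint αs) (hind.const_mul _), integral_const_mul,
      integral_indicator_const (1:ℝ) hmeas, smul_eq_mul, mul_one, measureReal_def] at hintle
    nlinarith [mul_le_mul_of_nonneg_left hintle hc0.le]
  constructor
  · -- case k ≤ qβ
    intro hk
    have hαs : (0:ℝ) ≤ qβ - k := by linarith
    have hq' : ∀ x, qβ - k < f x ↔ qβ < x := by
      intro x
      rw [hf, lt_max_iff]
      constructor
      · rintro (h | h) <;> linarith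
      · intro h; left; linarith
    have hp : (ν₀ (Set.Ioi qβ)).toReal = 1 - β := by
      rw [hq, toReal_ofReal hb.le]
    have hvalpt : ∀ x : ℝ, max (f x - (qβ - k)) 0 = max (x - qβ) 0 := by
      intro x
      rw [hf]
      rcases le_total x k with h | h
      · rw [max_eq_right (by linarith : x - k ≤ 0),
          max_eq_right (by linarith : (0:ℝ) - (qβ - k) ≤ 0),
          max_eq_right (by linarith : x - qβ ≤ 0)]
      · rw [max_eq_left (by linarith : (0:ℝ) ≤ x - k)]
        congr 1; ring
    have hval : (∫ x, max (f x - (qβ - k)) 0 ∂ν₀) = ∫ x, max (x - qβ) 0 ∂ν₀ :=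
      integral_congr_ae (Filter.Eventually.of_forall hvalpt)
    have hlow : ∀ α : ℝ, (qβ - k) + c * (∫ x, max (x - qβ) 0 ∂ν₀)
        ≤ α + c * ∫ x, max (f x - α) 0 ∂ν₀ := by
      intro α
      have h1 := main qβ (qβ - k) hq' α
      rw [hp, hcb, hval] at h1
      linarith
    have hbdd : BddBelow (Set.range fun α : ℝ => α + c * ∫ x, max (f x - α) 0 ∂ν₀) := by
      refine ⟨(qβ - k) + c * ∫ x, max (x - qβ) 0 ∂ν₀, ?_⟩
      rintro y ⟨a, rfl⟩
      exact hlow a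
    refine le_antisymm ?_ (le_ciInf hlow)
    have h2 := ciInf_le hbdd (qβ - k)
    rwa [hval] at h2
  · -- case qβ < k
    intro hk
    have hq' : ∀ x, 0 < f x ↔ k < x := by
      intro x
      rw [hf, lt_max_iff]
      constructor
      · rintro (h | h) <;> linarith
      · intro h; left; linarith
    have hple : (ν₀ (Set.Ioi k)).toReal ≤ 1 - β := by
      rw [← toReal_ofReal hb.le, ← hq]
      exact ENNReal.toReal_mono (by rw [hq]; exact ofReal_ne_top)
        (measure_mono (Set.Ioi_subset_Ioi hk.le))
    have hcp : c * (ν₀ (Set.Ioi k)).toReal ≤ 1 := by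
      calc c * (ν₀ (Set.Ioi k)).toReal ≤ c * (1 - β) :=
        mul_le_mul_of_nonneg_left hple hc0.le
      _ = 1 := hcb
    have hvalpt : ∀ x : ℝ, max (f x - 0) 0 = max (x - k) 0 := by
      intro x
      rw [hf, sub_zero, max_eq_left (le_max_right _ _)]
    have hval : (∫ x, max (f x - 0) 0 ∂ν₀) = ∫ x, max (x - k) 0 ∂ν₀ :=
      integral_congr_ae (Filter.Eventually.of_forall hvalpt)
    have hfval : (∫ x, f x ∂ν₀) = ∫ x, max (x - k) 0 ∂ν₀ :=
      integral_congr_ae (Filter.Eventually.of_forall (fun x => hf x))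
    have hlow : ∀ α : ℝ, c * (∫ x, max (x - k) 0 ∂ν₀)
        ≤ α + c * ∫ x, max (f x - α) 0 ∂ν₀ := by
      intro α
      rcases le_or_gt 0 α with hα | hα
      · have h1 := main k 0 hq' α
        rw [hval] at h1
        nlinarith [mul_nonneg hα (sub_nonneg.mpr hcp)]
      · have hnegval : ∀ x, max (f x - α) 0 = f x - α :=
          fun x => max_eq_left (by have := hf0 x; linarith)
        rw [integral_congr_ae (Filter.Eventually.of_forall hnegval),
          integral_sub hfint (integrable_const α), integral_const, probReal_univ]
        simp only [ENNReal.toReal_one, one_smul, hfval]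
        nlinarith [mul_nonneg (neg_nonneg.mpr hα.le) (sub_nonneg.mpr h1c.le)]
    have hbdd : BddBelow (Set.range fun α : ℝ => α + c * ∫ x, max (f x - α) 0 ∂ν₀) := by
      refine ⟨c * ∫ x, max (x - k) 0 ∂ν₀, ?_⟩
      rintro y ⟨a, rfl⟩
      exact hlow a
    refine le_antisymm ?_ (le_ciInf hlow)
    have h2 := ciInf_le hbdd 0
    rwa [hval, zero_add] at h2
end
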